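/- The ratio of the products of bipartite concurrences of the W and GHZ states satisfies $\frac{\mathcal{P}(|W_n\rangle)}{\mathcal{P}(|\mathrm{GHZ}_n\rangle)} = \prod_{m=1}^{\lfloor n/2 \rfloor} \left(2\sqrt{\frac{m(n-m)}{n^2}}\right)^{k_m}$, where $k_m = \binom{n}{m}$ for $m < n/2$ and $k_{n/2} = \frac12\binom{n}{n/2}$ when $n$ is even. -/

import Mathlib

/-- Multiplicity of the bipartitions of `n` parties whose smaller side has `m`
parties: `n.choose m` for `m < n/2`, and half of that when `n = 2m`. -/
noncomputable def kExp (n m : ℕ) : ℝ :=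
  if 2 * m = n then (n.choose m : ℝ) / 2 else (n.choose m : ℝ)

/-- Total number of bipartitions of `n` parties. -/
noncomputable def cAlpha (n : ℕ) : ℝ := ∑ m ∈ Finset.Icc 1 (n / 2), kExp n m

/-- Closed form for the GHZ-state bipartite concurrence across a bipartition
whose smaller side has `m` qubits. -/
noncomputable def ghzConc (m : ℕ) : ℝ := Real.sqrt ((2:ℝ)^m / (2 * ((2:ℝ)^m - 1)))

/-- Closed form for the W-state bipartite concurrence across a bipartition
whose smaller side has `m` qubits. -/
noncomputable def wConc (n m : ℕ) : ℝ :=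
  Real.sqrt ((2:ℝ)^(m+1) * m * ((n:ℝ) - m) / (((2:ℝ)^m - 1) * (n:ℝ)^2))

/-- Product of all bipartite concurrences of the `n`-qubit GHZ state. -/
noncomputable def ghzProd (n : ℕ) : ℝ :=
  ∏ m ∈ Finset.Icc 1 (n / 2), (ghzConc m) ^ (kExp n m)

/-- Product of all bipartite concurrences of the `n`-qubit W state. -/
noncomputable def wProd (n : ℕ) : ℝ :=
  ∏ m ∈ Finset.Icc 1 (n / 2), (wConc n m) ^ (kExp n m)

/-- The GBC of the `n`-qubit GHZ state (closed form). -/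
noncomputable def ghzGBC (n : ℕ) : ℝ := (ghzProd n) ^ (1 / cAlpha n)

/-- The GBC of the `n`-qubit W state (closed form). -/
noncomputable def wGBC (n : ℕ) : ℝ := (wProd n) ^ (1 / cAlpha n)

/-- The ratio of the products of bipartite concurrences of the W and GHZ states
equals `∏_{m=1}^{⌊n/2⌋} (2 √(m(n-m)/n²))^{k_m}`. -/
theorem wProd_div_ghzProd (n : ℕ) :
    wProd n / ghzProd n
      = ∏ m ∈ Finset.Icc 1 (n / 2),
          (2 * Real.sqrt ((m:ℝ) * ((n:ℝ) - m) / (n:ℝ)^2)) ^ (kExp n m) := by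
  rw [wProd, ghzProd, ← Finset.prod_div_distrib]
  refine Finset.prod_congr rfl ?_
  intro m hm
  simp only [Finset.mem_Icc] at hm
  obtain ⟨hm1, hm2⟩ := hm
  have hn2 : 2 ≤ n := by omega
  have hmn : m ≤ n := by omega
  have hnR : (0:ℝ) < (n:ℝ) := by positivity
  have h2m : (1:ℝ) < (2:ℝ)^m := by
    have : (2:ℝ)^0 < (2:ℝ)^m := by
      apply pow_lt_pow_right₀ one_lt_two (by omega)
    simpa using this
  have h2m' : (0:ℝ) < (2:ℝ)^m - 1 := by linarith
  have hmR : (0:ℝ) < (m:ℝ) := by exact_mod_cast Nat.pos_of_ne_zero (by omega)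
  have hnm : (0:ℝ) ≤ (n:ℝ) - m := by
    have : (m:ℝ) ≤ (n:ℝ) := by exact_mod_cast hmn
    linarith
  have hw : 0 ≤ wConc n m := Real.sqrt_nonneg _
  have hg : 0 ≤ ghzConc m := Real.sqrt_nonneg _
  rw [← Real.div_rpow hw hg]
  congr 1
  rw [wConc, ghzConc, ← Real.sqrt_div' _ (by positivity)]
  rw [show (2:ℝ) * Real.sqrt ((m:ℝ) * ((n:ℝ) - m) / (n:ℝ)^2)
      = Real.sqrt (4 * ((m:ℝ) * ((n:ℝ) - m) / (n:ℝ)^2)) by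
    rw [show (4:ℝ) = 2^2 by norm_num, Real.sqrt_mul (by positivity), Real.sqrt_sq (by norm_num)]]
  congr 1
  have h2 : ((2:ℝ)^m) ≠ 0 := by positivity
  field_simp
  ring
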